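/- arXiv:1707.01711 — 2 statements merged into one kernel-verified Lean document; each statement's English description precedes it below -/
import Mathlib

section
/- Let φ : ℝ → ℝ be a nonnegative, monotonically non-increasing, convex, differentiable function and set ϕ := −φ′. Fix data points x_1,…,x_n ∈ ℝ^D, bandwidths σ_1,…,σ_D > 0, and nonnegative coefficients β_j^{(i)} ≥ 0 (1 ≤ i ≤ n, 1 ≤ j ≤ D). Define the estimated log-density gradient components ĝ_j(x) := Σ_{i=1}^n β_j^{(i)} ((x_i^{(j)} − x^{(j)})/σ_j^2) ϕ(‖x − x_i‖^2/(2σ_j^2)). Given a current point z^τ ∈ ℝ^D, define the coordinate-wise update z^{τ+1}: for j = 1,…,D, z^{(τ+1,j)} := [ Σ_i β_j^{(i)} x_i^{(j)} ϕ(‖z̃_j − x_i‖^2/(2σ_j^2)) ] / [ Σ_i β_j^{(i)} ϕ(‖z̃_j − x_i‖^2/(2σ_j^2)) ], where z̃_j := (z^{(τ+1,1)},…,z^{(τ+1,j−1)}, z^{(τ,j)}, z^{(τ,j+1)},…,z^{(τ,D)}) and each denominator is assumed nonzero. Then the coordinate-path integral satisfies D̂_ĝ[z^{τ+1} | z^τ]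 := Σ_{j=1}^D ∫_{z^{(τ,j)}}^{z^{(τ+1,j)}} ĝ_j(z^{(τ+1,1)},…,z^{(τ+1,j−1)}, t, z^{(τ,j+1)},…,z^{(τ,D)}) dt ≥ 0. -/
open MeasureTheory

namespace Stmt1

/-- The point `(x^{(1)},…,x^{(j−1)}, t, y^{(j+1)},…,y^{(D)})` on the coordinate-wise
path from `y` to `x`. -/
noncomputable def pathSeg {D : ℕ} (x y : Fin D → ℝ) (j : Fin D) (t : ℝ) : Fin D → ℝ :=
  fun i => if i < j then x i else if i = j then t else y i

/-- Squared Euclidean distance `‖z − c‖²` on `ℝ^D`. -/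
noncomputable def sqDist {D : ℕ} (z c : Fin D → ℝ) : ℝ := ∑ k, (z k - c k) ^ 2

/-- The estimated log-density gradient component
`ĝ_j(x) := Σ_i β_j^{(i)} ((x_i^{(j)} − x^{(j)})/σ_j²) ϕ(‖x − x_i‖²/(2σ_j²))`
with `ϕ = −φ′`. -/
noncomputable def ghat {D n : ℕ} (φ : ℝ → ℝ) (xdata : Fin n → Fin D → ℝ)
    (σ : Fin D → ℝ) (β : Fin n → Fin D → ℝ) (j : Fin D) (x : Fin D → ℝ) : ℝ :=
  ∑ i, β i j * ((xdata i j - x j) / (σ j) ^ 2)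
    * (-(deriv φ (sqDist x (xdata i) / (2 * (σ j) ^ 2))))

/- ### Auxiliary lemmas -/

lemma pathSeg_self {D : ℕ} (x y : Fin D → ℝ) (j : Fin D) (t : ℝ) :
    pathSeg x y j t j = t := by
  simp [pathSeg]

lemma pathSeg_ne {D : ℕ} (x y : Fin D → ℝ) (j k : Fin D) (t s : ℝ) (hk : k ≠ j) :
    pathSeg x y j t k = pathSeg x y j s k := by
  simp [pathSeg, hk]

lemma sqDist_pathSeg {D : ℕ} (x y c : Fin D → ℝ) (j : Fin D) (t : ℝ) :
    sqDist (pathSeg x y j t) c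
      = (t - c j) ^ 2 + ∑ k ∈ Finset.univ.erase j, (pathSeg x y j 0 k - c k) ^ 2 := by
  unfold sqDist
  rw [← Finset.add_sum_erase _ _ (Finset.mem_univ j), pathSeg_self]
  congr 1
  refine Finset.sum_congr rfl fun k hk => ?_
  rw [pathSeg_ne x y j k t 0 (Finset.ne_of_mem_erase hk)]

/-- Tangent line inequality for convex differentiable functions. -/
lemma tangent_le {φ : ℝ → ℝ} (hconv : ConvexOn ℝ Set.univ φ)
    (hdiff : Differentiable ℝ φ) (a b : ℝ) :
    φ a + deriv φ a * (b - a) ≤ φ b := by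
  rcases lt_trichotomy a b with h | h | h
  · have hs := hconv.deriv_le_slope (Set.mem_univ a) (Set.mem_univ b) h (hdiff a)
    rw [slope_def_field] at hs
    have hb : 0 < b - a := by linarith
    have := (le_div_iff₀ hb).mp hs
    linarith
  · simp [h]
  · have hs := hconv.slope_le_deriv (Set.mem_univ b) (Set.mem_univ a) h (hdiff a)
    rw [slope_def_field] at hs
    have hb : 0 < a - b := by linarith
    have := (div_le_iff₀ hb).mp hs
    nlinarith

/-- A function antitone on `Iic a` and monotone on `Ici a` is interval integrable. -/
lemma intervalIntegrable_of_anti_mono {h : ℝ → ℝ} {a : ℝ}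
    (h1 : AntitoneOn h (Set.Iic a)) (h2 : MonotoneOn h (Set.Ici a)) (c d : ℝ) :
    IntervalIntegrable h volume c d := by
  have H : ∀ e : ℝ, IntervalIntegrable h volume e a := by
    intro e
    rcases le_total e a with he | he
    · refine (h1.mono ?_).intervalIntegrable
      rw [Set.uIcc_of_le he]
      exact fun x hx => hx.2
    · refine (h2.mono ?_).intervalIntegrable
      rw [Set.uIcc_of_ge he]
      exact fun x hx => hx.1
  exact (H c).trans (H d).symm

lemma sum_quad {n : ℕ} (w a : Fin n → ℝ) (t : ℝ) :
    ∑ i, w i * (t - a i) ^ 2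
      = (∑ i, w i) * t ^ 2 - 2 * (∑ i, w i * a i) * t + ∑ i, w i * a i ^ 2 := by
  simp only [Finset.sum_mul, Finset.mul_sum, ← Finset.sum_sub_distrib,
    ← Finset.sum_add_distrib]
  exact Finset.sum_congr rfl fun i _ => by ring

/-- The weighted mean minimizes the weighted sum of squares. -/
lemma quad_min {n : ℕ} (w a : Fin n → ℝ) (hw : ∀ i, 0 ≤ w i)
    (hS : (∑ i, w i) ≠ 0) (t : ℝ) :
    ∑ i, w i * ((∑ i, w i * a i) / (∑ i, w i) - a i) ^ 2
      ≤ ∑ i, w i * (t - a i) ^ 2 := by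
  have hS' : 0 < ∑ i, w i :=
    (Finset.sum_nonneg fun i _ => hw i).lt_of_ne' hS
  rw [sum_quad, sum_quad]
  set S := ∑ i, w i
  set T := ∑ i, w i * a i
  have h1 : S * (T / S) ^ 2 = T ^ 2 / S := by field_simp
  have h2 : 2 * T * (T / S) = 2 * T ^ 2 / S := by field_simp
  rw [h1, h2]
  have key : 0 ≤ (S * t - T) ^ 2 / S := by positivity
  have hexp : (S * t - T) ^ 2 / S = S * t ^ 2 - 2 * T * t + T ^ 2 / S := by
    field_simp; ring
  have key2 : 0 ≤ S * t ^ 2 - 2 * T * t + T ^ 2 / S := hexp ▸ key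
  have h3 : 2 * T ^ 2 / S = 2 * (T ^ 2 / S) := by ring
  linarith

/-- Let `φ : ℝ → ℝ` be nonnegative, monotonically non-increasing, convex
and differentiable, with `ϕ := −φ′`.  Fix data `x_1,…,x_n ∈ ℝ^D`, bandwidths `σ_j > 0`, and
nonnegative coefficients `β_j^{(i)} ≥ 0`.  Given a current point `z^τ`, let `z^{τ+1}` be the
coordinate-wise update: for each `j`,
`z^{(τ+1,j)} = [Σ_i β_j^{(i)} x_i^{(j)} ϕ(‖z̃_j − x_i‖²/(2σ_j²))] /
               [Σ_i β_j^{(i)} ϕ(‖z̃_j − x_i‖²/(2σ_j²))]`,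
where `z̃_j = (z^{(τ+1,1)},…,z^{(τ+1,j−1)}, z^{(τ,j)},…,z^{(τ,D)})` and each denominator
is nonzero.  Then the coordinate-path integral
`D̂_ĝ[z^{τ+1}|z^τ] = Σ_j ∫_{z^{(τ,j)}}^{z^{(τ+1,j)}} ĝ_j(z^{(τ+1,1)},…,t,…,z^{(τ,D)}) dt`
is nonnegative. -/
theorem stmt_1
    {D n : ℕ} (φ : ℝ → ℝ)
    (hnonneg : ∀ t : ℝ, 0 ≤ φ t) (hmono : Antitone φ)
    (hconv : ConvexOn ℝ Set.univ φ) (hdiff : Differentiable ℝ φ)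
    (xdata : Fin n → Fin D → ℝ) (σ : Fin D → ℝ) (hσ : ∀ j, 0 < σ j)
    (β : Fin n → Fin D → ℝ) (hβ : ∀ i j, 0 ≤ β i j)
    (zold znew : Fin D → ℝ)
    (hden : ∀ j : Fin D,
      (∑ i, β i j * (-(deriv φ
          (sqDist (pathSeg znew zold j (zold j)) (xdata i) / (2 * (σ j) ^ 2))))) ≠ 0)
    (hupdate : ∀ j : Fin D,
      znew j =
        (∑ i, β i j * xdata i j * (-(deriv φ
            (sqDist (pathSeg znew zold j (zold j)) (xdata i) / (2 * (σ j) ^ 2)))))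
        / (∑ i, β i j * (-(deriv φ
            (sqDist (pathSeg znew zold j (zold j)) (xdata i) / (2 * (σ j) ^ 2)))))) :
    0 ≤ ∑ j : Fin D, ∫ t in (zold j)..(znew j),
          ghat φ xdata σ β j (pathSeg znew zold j t) := by
  -- derivative of φ is nonpositive and monotone
  have hd0 : ∀ x : ℝ, deriv φ x ≤ 0 := by
    intro x
    have hs := hconv.deriv_le_slope (Set.mem_univ x) (Set.mem_univ (x + 1))
      (by linarith) (hdiff x)
    rw [slope_def_field] at hs
    have : φ (x + 1) ≤ φ x := hmono (by linarith)
    have h1 : (φ (x + 1) - φ x) / (x + 1 - x) = φ (x + 1) - φ x := by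
      norm_num
    rw [h1] at hs
    linarith
  have hdm : Monotone (deriv φ) := by
    have := hconv.monotoneOn_deriv (fun x _ => hdiff x)
    exact monotoneOn_univ.mp this
  refine Finset.sum_nonneg fun j _ => ?_
  have hσj : (σ j : ℝ) ≠ 0 := (hσ j).ne'
  have hs : (0:ℝ) < 2 * (σ j) ^ 2 := by positivity
  set a : Fin n → ℝ := fun i => xdata i j with ha
  set K : Fin n → ℝ :=
    fun i => ∑ k ∈ Finset.univ.erase j, (pathSeg znew zold j 0 k - xdata i k) ^ 2 with hK
  set u : Fin n → ℝ → ℝ :=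
    fun i t => sqDist (pathSeg znew zold j t) (xdata i) / (2 * (σ j) ^ 2) with hu'
  have hu : ∀ i t, u i t = ((t - a i) ^ 2 + K i) / (2 * (σ j) ^ 2) := by
    intro i t
    rw [hu']
    simp only [sqDist_pathSeg]
    rfl
  set G : ℝ → ℝ := fun t => ∑ i, β i j * φ (u i t) with hG
  -- the integrand as derivative of G
  have hderivG : ∀ t : ℝ,
      HasDerivAt G (ghat φ xdata σ β j (pathSeg znew zold j t)) t := by
    intro t
    have hgh : ghat φ xdata σ β j (pathSeg znew zold j t)
        = ∑ i, β i j * ((a i - t) / (σ j) ^ 2) * (-(deriv φ (u i t))) := by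
      unfold ghat
      refine Finset.sum_congr rfl fun i _ => ?_
      rw [pathSeg_self]
    rw [hgh]
    refine HasDerivAt.fun_sum fun i _ => ?_
    have hfun : (fun t => β i j * φ (u i t))
        = fun t => β i j * φ (((t - a i) ^ 2 + K i) / (2 * (σ j) ^ 2)) := by
      funext s; rw [hu]
    rw [hfun]
    have hq : HasDerivAt (fun s => ((s - a i) ^ 2 + K i) / (2 * (σ j) ^ 2))
        ((2 * (t - a i)) / (2 * (σ j) ^ 2)) t := by
      have h := ((((hasDerivAt_id t).sub_const (a i)).pow 2).add_const
        (K i)).div_const (2 * (σ j) ^ 2)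
      refine h.congr_deriv ?_
      norm_num
    have hφ := ((hdiff _).hasDerivAt.comp t hq).const_mul (β i j)
    refine hφ.congr_deriv ?_
    · rw [hu]
      field_simp
      ring
  -- integrability of the integrand
  have hint : IntervalIntegrable
      (fun t => ghat φ xdata σ β j (pathSeg znew zold j t)) volume (zold j) (znew j) := by
    have heq : (fun t => ghat φ xdata σ β j (pathSeg znew zold j t))
        = ∑ i : Fin n, fun t =>
            (β i j * ((a i - t) / (σ j) ^ 2) * (-1 : ℝ))
              * deriv φ (((t - a i) ^ 2 + K i) / (2 * (σ j) ^ 2)) := by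
      funext t
      rw [Finset.sum_apply]
      unfold ghat
      refine Finset.sum_congr rfl fun i _ => ?_
      rw [pathSeg_self]
      have := hu i t
      rw [hu'] at this
      rw [← this]
      ring
    rw [heq]
    refine IntervalIntegrable.sum _ fun i _ => ?_
    have hbase : IntervalIntegrable
        (fun t => deriv φ (((t - a i) ^ 2 + K i) / (2 * (σ j) ^ 2)))
        volume (zold j) (znew j) := by
      refine intervalIntegrable_of_anti_mono (a := a i) ?_ ?_ _ _
      · intro x hx y hy hxy
        apply hdm
        have hx' : x ≤ a i := hx
        have hy' : y ≤ a i := hy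
        rw [div_le_div_iff_of_pos_right hs]
        nlinarith
      · intro x hx y hy hxy
        apply hdm
        have hx' : a i ≤ x := hx
        have hy' : a i ≤ y := hy
        rw [div_le_div_iff_of_pos_right hs]
        nlinarith
    exact hbase.continuousOn_mul (by fun_prop)
  -- FTC
  have hFTC : (∫ t in (zold j)..(znew j), ghat φ xdata σ β j (pathSeg znew zold j t))
      = G (znew j) - G (zold j) :=
    intervalIntegral.integral_eq_sub_of_hasDerivAt (fun t _ => hderivG t) hint
  rw [hFTC, sub_nonneg]
  -- core inequality: G (zold j) ≤ G (znew j)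
  set w : Fin n → ℝ := fun i => β i j * (-(deriv φ (u i (zold j)))) with hw
  have hw0 : ∀ i, 0 ≤ w i := fun i =>
    mul_nonneg (hβ i j) (neg_nonneg.mpr (hd0 _))
  have hwS : (∑ i, w i) ≠ 0 := hden j
  have hznew : znew j = (∑ i, w i * a i) / (∑ i, w i) := by
    rw [hupdate j]
    congr 1
    exact Finset.sum_congr rfl fun i _ => by rw [hw]; ring
  have htan : ∀ i : Fin n,
      β i j * φ (u i (zold j))
          + β i j * (deriv φ (u i (zold j)) * (u i (znew j) - u i (zold j)))
        ≤ β i j * φ (u i (znew j)) := by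
    intro i
    have := tangent_le hconv hdiff (u i (zold j)) (u i (znew j))
    nlinarith [hβ i j, this]
  have hsum : G (zold j)
      + ∑ i, β i j * (deriv φ (u i (zold j)) * (u i (znew j) - u i (zold j)))
      ≤ G (znew j) := by
    rw [hG, ← Finset.sum_add_distrib]
    exact Finset.sum_le_sum fun i _ => htan i
  have hrw : ∑ i, β i j * (deriv φ (u i (zold j)) * (u i (znew j) - u i (zold j)))
      = ((∑ i, w i * (zold j - a i) ^ 2) - ∑ i, w i * (znew j - a i) ^ 2)
          / (2 * (σ j) ^ 2) := by
    rw [← Finset.sum_sub_distrib, Finset.sum_div]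
    refine Finset.sum_congr rfl fun i _ => ?_
    have h1 : u i (znew j) - u i (zold j)
        = ((znew j - a i) ^ 2 - (zold j - a i) ^ 2) / (2 * (σ j) ^ 2) := by
      rw [hu, hu, div_sub_div_same]
      congr 1
      ring
    have h2 : w i = β i j * (-(deriv φ (u i (zold j)))) := rfl
    rw [h1, h2]
    generalize deriv φ (u i (zold j)) = d
    field_simp
    ring
  have hmin : ∑ i, w i * (znew j - a i) ^ 2 ≤ ∑ i, w i * (zold j - a i) ^ 2 := by
    rw [hznew]
    exact quad_min w a hw0 hwS (zold j)
  have : 0 ≤ ∑ i, β i j * (deriv φ (u i (zold j)) * (u i (znew j) - u i (zold j))) := by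
    rw [hrw]
    apply div_nonneg _ hs.le
    linarith
  linarith

end Stmt1
end

section
/- Let H be a separable reproducing kernel Hilbert space of real-valued functions on X ⊆ ℝ^D with kernel k, p a probability density on X with ∫_X ‖k(·,x)‖_H^2 p(x) dx < ∞ and ∫_X ‖∂_j k(·,x)‖_H p(x) dx < ∞, and suppose r*_j := ∂_j p / p ∈ H. Assume the integration-by-parts identity ∫_X k(·,x) ∂_j p(x) dx = (−1)^{|j|} ∫_X ∂_j k(·,x) p(x) dx (Bochner integrals in H). Then the covariance operator C := ∫_X k(·,x) ⊗ k(·,x) p(x) dx satisfies C r*_j = ξ_j, where ξ_j := (−1)^{|j|} ∫_X ∂_j k(·,x) p(x) dx. -/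
open MeasureTheory

namespace Stmt9

variable {H : Type*} [NormedAddCommGroup H] [InnerProductSpace ℝ H] [CompleteSpace H]

/-- The rank-one operator `f ⊗ g : h ↦ ⟪g, h⟫ f`. -/
noncomputable def rankOne (f g : H) : H →L[ℝ] H := (innerSL ℝ g).smulRight f

/-- Partial derivative in the `j`-th coordinate of a vector-valued map on `ℝ^D`. -/
noncomputable def coordDeriv {D : ℕ} {E : Type*} [NormedAddCommGroup E] [NormedSpace ℝ E]
    (j : Fin D) (F : (Fin D → ℝ) → E) : (Fin D → ℝ) → E :=
  fun x => fderiv ℝ F x (Pi.single j 1)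

/-- Multi-index partial derivative `∂_j` for the multi-index given by a list of
coordinates (`|j|` is the length of the list). -/
noncomputable def multiDeriv {D : ℕ} {E : Type*} [NormedAddCommGroup E] [NormedSpace ℝ E]
    (js : List (Fin D)) (F : (Fin D → ℝ) → E) : (Fin D → ℝ) → E :=
  js.foldr coordDeriv F

section Density

open Set Filter Metric Topology Pointwise MeasureTheory.Measure

/-- If `f` vanishes on `s`, then `fderiv ℝ f = 0` a.e. on `s` (density point argument). -/
lemma fderiv_ae_zero {D : ℕ} {F : Type*} [NormedAddCommGroup F] [NormedSpace ℝ F]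
    (f : (Fin D → ℝ) → F) (s : Set (Fin D → ℝ)) (hf : ∀ x ∈ s, f x = 0) :
    ∀ᵐ x ∂(volume.restrict s), fderiv ℝ f x = 0 := by
  filter_upwards [Besicovitch.ae_tendsto_measure_inter_div volume s] with x hx
  by_cases hd : DifferentiableAt ℝ f x
  swap
  · exact fderiv_zero_of_not_differentiableAt hd
  -- `x` is in the closure of `s`
  have hclos : x ∈ closure s := by
    rw [Metric.mem_closure_iff]
    intro ε εpos
    have h1 : ∀ᶠ r in 𝓝[>] (0 : ℝ),
        0 < volume (s ∩ closedBall x r) / volume (closedBall x r) :=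
      (tendsto_order.1 hx).1 0 zero_lt_one
    have h2 : ∀ᶠ r in 𝓝[>] (0 : ℝ), r < ε :=
      eventually_of_mem (Ioo_mem_nhdsGT_of_mem ⟨le_rfl, εpos⟩) fun r hr => hr.2
    obtain ⟨r, hr0, hrε, hrpos⟩ := (h1.and (h2.and self_mem_nhdsWithin)).exists
    have hne : (s ∩ closedBall x r).Nonempty := by
      rcases eq_or_ne (volume (s ∩ closedBall x r)) 0 with h | h
      · simp [h] at hr0
      · exact nonempty_of_measure_ne_zero h
    obtain ⟨y, hys, hyb⟩ := hne
    exact ⟨y, hys, by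
      have := mem_closedBall.1 hyb
      calc dist x y = dist y x := dist_comm _ _
        _ ≤ r := this
        _ < ε := hrε⟩
  have hfx : f x = 0 := by
    have hne : (𝓝[s] x).NeBot := mem_closure_iff_nhdsWithin_neBot.1 hclos
    have t1 : Tendsto f (𝓝[s] x) (𝓝 (f x)) := hd.continuousAt.continuousWithinAt
    have t2 : Tendsto f (𝓝[s] x) (𝓝 (0 : F)) := by
      apply Tendsto.congr' _ tendsto_const_nhds
      exact eventually_nhdsWithin_of_forall fun y hy => (hf y hy).symm
    exact tendsto_nhds_unique t1 t2
  set L := fderiv ℝ f x with hL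
  ext z
  simp only [ContinuousLinearMap.zero_apply]
  rw [← norm_le_zero_iff]
  have H : ∀ ε : ℝ, 0 < ε → ‖L z‖ ≤ ε * (‖z‖ + ε) + ‖L‖ * ε := by
    intro ε εpos
    obtain ⟨ρ, ρpos, hρ⟩ :
        ∃ ρ > 0, ball x ρ ⊆ {y | ‖f y - f x - L (y - x)‖ ≤ ε * ‖y - x‖} := by
      have := hd.hasFDerivAt.isLittleO.def εpos
      rcases Metric.eventually_nhds_iff_ball.1 this with ⟨ρ, ρpos, hρ⟩
      exact ⟨ρ, ρpos, fun y hy => hρ y hy⟩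
    have B₁ : ∀ᶠ r in 𝓝[>] (0 : ℝ), (s ∩ ({x} + r • closedBall z ε)).Nonempty :=
      eventually_nonempty_inter_smul_of_density_one volume s x hx _
        measurableSet_closedBall (measure_closedBall_pos volume z εpos).ne'
    have B₂ : ∀ᶠ r in 𝓝[>] (0 : ℝ), {x} + r • closedBall z ε ⊆ ball x ρ :=
      nhdsWithin_le_nhds
        (eventually_singleton_add_smul_subset isBounded_closedBall (ball_mem_nhds x ρpos))
    obtain ⟨r, ⟨y, ys, hy⟩, rρ, rpos⟩ :
        ∃ r : ℝ, (s ∩ ({x} + r • closedBall z ε)).Nonempty ∧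
          {x} + r • closedBall z ε ⊆ ball x ρ ∧ 0 < r :=
      (B₁.and (B₂.and self_mem_nhdsWithin)).exists
    obtain ⟨a, az, ya⟩ : ∃ a, a ∈ closedBall z ε ∧ y = x + r • a := by
      simp only [mem_smul_set, image_add_left, mem_preimage, singleton_add] at hy
      rcases hy with ⟨a, az, ha⟩
      exact ⟨a, az, by simp only [ha, add_neg_cancel_left]⟩
    have norm_a : ‖a‖ ≤ ‖z‖ + ε :=
      calc ‖a‖ = ‖z + (a - z)‖ := by simp
        _ ≤ ‖z‖ + ‖a - z‖ := norm_add_le _ _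
        _ ≤ ‖z‖ + ε := add_le_add le_rfl (mem_closedBall_iff_norm.1 az)
    have hyb : y ∈ ball x ρ := rρ hy
    have key1 : ‖L (y - x)‖ ≤ ε * ‖y - x‖ := by
      have h := hρ hyb
      rw [mem_setOf_eq, hf y ys, hfx] at h
      simpa [norm_sub_rev] using h
    have hyx : y - x = r • a := by rw [ya]; abel
    have hLa : ‖L a‖ ≤ ε * (‖z‖ + ε) := by
      rw [hyx] at key1
      rw [L.map_smul, norm_smul, norm_smul, Real.norm_eq_abs, abs_of_pos rpos] at key1
      have h2 : ‖L a‖ ≤ ε * ‖a‖ := by nlinarith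
      calc ‖L a‖ ≤ ε * ‖a‖ := h2
        _ ≤ ε * (‖z‖ + ε) := by nlinarith [norm_nonneg a]
    have hz : z = a + (z - a) := by abel
    calc ‖L z‖ = ‖L (a + (z - a))‖ := by rw [← hz]
      _ = ‖L a + L (z - a)‖ := by rw [L.map_add]
      _ ≤ ‖L a‖ + ‖L (z - a)‖ := norm_add_le _ _
      _ ≤ ε * (‖z‖ + ε) + ‖L‖ * ‖z - a‖ := add_le_add hLa (L.le_opNorm _)
      _ ≤ ε * (‖z‖ + ε) + ‖L‖ * ε := by
          have : ‖z - a‖ ≤ ε := by rw [norm_sub_rev]; exact mem_closedBall_iff_norm.1 az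
          nlinarith [norm_nonneg L]
  have hlim : Tendsto (fun ε : ℝ => ε * (‖z‖ + ε) + ‖L‖ * ε) (𝓝[>] 0)
      (𝓝 (0 * (‖z‖ + 0) + ‖L‖ * 0)) :=
    Tendsto.mono_left (Continuous.tendsto (by fun_prop) 0) nhdsWithin_le_nhds
  simp only [zero_mul, mul_zero, add_zero] at hlim
  apply le_of_tendsto_of_tendsto tendsto_const_nhds hlim
  filter_upwards [self_mem_nhdsWithin] with ε hε
  exact H ε hε

/-- If `f` vanishes on `s`, then all iterated coordinate derivatives of `f` vanish
outer-almost-everywhere on `s`. -/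
lemma multiDeriv_null {D : ℕ} {F : Type*} [NormedAddCommGroup F] [NormedSpace ℝ F]
    (s : Set (Fin D → ℝ)) (f : (Fin D → ℝ) → F) (hf : ∀ x ∈ s, f x = 0)
    (js : List (Fin D)) :
    volume {x | x ∈ s ∧ multiDeriv js f x ≠ 0} = 0 := by
  induction js with
  | nil =>
      have : {x | x ∈ s ∧ multiDeriv [] f x ≠ 0} = ∅ := by
        ext x
        simp only [mem_setOf_eq, mem_empty_iff_false, iff_false, not_and, not_not]
        intro hx
        exact hf x hx
      simp [this]
  | cons j tl ih =>
      set A := {x | x ∈ s ∧ multiDeriv tl f x ≠ 0} with hA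
      set s' := s \ toMeasurable volume A with hs'
      have hAm : volume (toMeasurable volume A) = 0 := by
        rw [measure_toMeasurable]; exact ih
      have hss' : volume (s \ s') = 0 := by
        apply measure_mono_null _ hAm
        intro x hx
        simp only [hs', Set.mem_diff, not_and, not_not] at hx
        exact hx.2 hx.1
      have hzero : ∀ x ∈ s', multiDeriv tl f x = 0 := by
        intro x hx
        by_contra hne
        exact hx.2 (subset_toMeasurable volume A ⟨hx.1, hne⟩)
      have hae : ∀ᵐ x ∂(volume.restrict s'), fderiv ℝ (multiDeriv tl f) x = 0 :=
        fderiv_ae_zero (multiDeriv tl f) s' hzero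
      rw [ae_iff] at hae
      set B := {x | x ∈ s ∧ multiDeriv (j :: tl) f x ≠ 0} with hB
      have hBs : B ⊆ s := fun x hx => hx.1
      have h1 : volume (B ∩ s') = 0 := by
        apply le_antisymm _ zero_le
        calc volume (B ∩ s')
            ≤ volume ({x | ¬ fderiv ℝ (multiDeriv tl f) x = 0} ∩ s') := by
              apply measure_mono
              rintro x ⟨hxB, hxs'⟩
              refine ⟨?_, hxs'⟩
              intro hzero'
              apply hxB.2
              show coordDeriv j (multiDeriv tl f) x = 0
              unfold coordDeriv
              rw [hzero']
              rfl
          _ ≤ (volume.restrict s') {x | ¬ fderiv ℝ (multiDeriv tl f) x = 0} :=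
              Measure.le_restrict_apply _ _
          _ = 0 := hae
      have h2 : volume (B \ s') = 0 := by
        apply measure_mono_null _ hss'
        intro x hx
        exact ⟨hBs hx.1, hx.2⟩
      refine le_antisymm ?_ zero_le
      calc volume B = volume ((B ∩ s') ∪ (B \ s')) := by rw [Set.inter_union_diff]
        _ ≤ volume (B ∩ s') + volume (B \ s') := measure_union_le _ _
        _ = 0 := by rw [h1, h2, add_zero]

end Density

/-- Let `H` be a separable RKHS of real-valued functions on `X ⊆ ℝ^D` with
kernel `k` (feature map `K`, reproducing property `f(x) = ⟪f, K x⟫`), `p` a probability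
density on `X` with `∫_X ‖k(·,x)‖²_H p(x) dx < ∞` and `∫_X ‖∂_j k(·,x)‖_H p(x) dx < ∞`, and
suppose `r*_j := ∂_j p / p ∈ H`.  Assume the integration-by-parts identity
`∫_X k(·,x) ∂_j p(x) dx = (−1)^{|j|} ∫_X ∂_j k(·,x) p(x) dx` (Bochner integrals in `H`).
Then the covariance operator `C := ∫_X k(·,x) ⊗ k(·,x) p(x) dx` satisfies `C r*_j = ξ_j`
where `ξ_j := (−1)^{|j|} ∫_X ∂_j k(·,x) p(x) dx`. -/
theorem stmt_9
    [TopologicalSpace.SeparableSpace H]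
    {D : ℕ} (X : Set (Fin D → ℝ)) (hX : MeasurableSet X)
    (K : (Fin D → ℝ) → H) (p : (Fin D → ℝ) → ℝ)
    (hp_nonneg : ∀ x ∈ X, 0 ≤ p x)
    (hp_prob : ∫ x in X, p x = 1)
    (js : List (Fin D))
    (rstar : H)
    (hrepr : ∀ x ∈ X, (inner ℝ rstar (K x) : ℝ) = multiDeriv js p x / p x)
    (hK2 : Integrable (fun x => p x * ‖K x‖ ^ 2) (volume.restrict X))
    (hDK1 : Integrable (fun x => p x * ‖multiDeriv js K x‖) (volume.restrict X))
    (hCint : Integrable (fun x => p x • rankOne (K x) (K x)) (volume.restrict X))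
    (hint1 : Integrable (fun x => (multiDeriv js p x) • K x) (volume.restrict X))
    (hint2 : Integrable (fun x => p x • multiDeriv js K x) (volume.restrict X))
    (hibp : ∫ x in X, (multiDeriv js p x) • K x
        = ((-1 : ℝ) ^ js.length) • ∫ x in X, p x • multiDeriv js K x) :
    (∫ x in X, p x • rankOne (K x) (K x)) rstar
      = ((-1 : ℝ) ^ js.length) • ∫ x in X, p x • multiDeriv js K x := by
  rw [← hibp]
  rw [ContinuousLinearMap.integral_apply hCint rstar]
  -- the null set where `p = 0` but `∂p ≠ 0`
  have hnull : volume {x | x ∈ {y ∈ X | p y = 0} ∧ multiDeriv js p x ≠ 0} = 0 :=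
    multiDeriv_null {y ∈ X | p y = 0} p (fun x hx => hx.2) js
  have hae : ∀ᵐ x ∂(volume.restrict X), p x = 0 → multiDeriv js p x = 0 := by
    rw [ae_iff, Measure.restrict_apply' hX]
    apply measure_mono_null _ hnull
    intro x hx
    simp only [Set.mem_inter_iff, Set.mem_setOf_eq] at hx ⊢
    push_neg at hx
    exact ⟨⟨hx.2, hx.1.1⟩, hx.1.2⟩
  apply integral_congr_ae
  filter_upwards [hae, ae_restrict_mem hX] with x h0 hxX
  show (p x • rankOne (K x) (K x)) rstar = multiDeriv js p x • K x
  have hr : rankOne (K x) (K x) rstar = (inner ℝ (K x) rstar : ℝ) • K x := by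
    simp [rankOne]
  rw [ContinuousLinearMap.smul_apply, hr, real_inner_comm, hrepr x hxX]
  by_cases hp : p x = 0
  · simp [hp, h0 hp]
  · rw [smul_smul, mul_div_cancel₀ _ hp]

end Stmt9
end
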